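/- arXiv:1008.4441 — 4 statements merged into one kernel-verified Lean document; each statement's English description precedes it below -/
import Mathlib

section
/- Let U be a finite-dimensional linear subspace of a separable Hilbert space H, Π_U the orthogonal projection onto U, and X an H-valued L² random variable. Then for the level-N quadratic quantization errors, e_N(Π_U(X))² ≤ e_N(X)² ≤ E[‖X − Π_U(X)‖²] + e_N(Π_U(X))², where the right-hand inequality holds because the infimum of E[min_{a∈Γ} ‖X−a‖²] over codebooks Γ ⊂ U of size at most N equals E‖X − Π_U(X)‖² + e_N(Π_U(X))². -/
open MeasureTheory

/-- Minimal squared quadratic quantization error at level `N`, over codebooks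
constrained to lie in a given set `S ⊆ H`. -/
noncomputable def quantErrSqIn {Ω H : Type*} [MeasureSpace Ω] [NormedAddCommGroup H]
    (X : Ω → H) (N : ℕ) (S : Set H) : ℝ :=
  sInf { v | ∃ Γ : Finset H, ∃ h : Γ.Nonempty, (Γ : Set H) ⊆ S ∧ Γ.card ≤ N ∧
    v = ∫ ω, (Γ.inf' h fun a => ‖X ω - a‖ ^ 2) }

/-- Minimal squared quadratic quantization error at level `N`. -/
noncomputable def quantErrSq {Ω H : Type*} [MeasureSpace Ω] [NormedAddCommGroup H]
    (X : Ω → H) (N : ℕ) : ℝ :=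
  quantErrSqIn X N Set.univ

set_option linter.unusedSectionVars false

/-- The set of attainable quantization errors. -/
def QSet {Ω H : Type*} [MeasureSpace Ω] [NormedAddCommGroup H]
    (X : Ω → H) (N : ℕ) (S : Set H) : Set ℝ :=
  { v | ∃ Γ : Finset H, ∃ h : Γ.Nonempty, (Γ : Set H) ⊆ S ∧ Γ.card ≤ N ∧
    v = ∫ ω, (Γ.inf' h fun a => ‖X ω - a‖ ^ 2) }

lemma quantErrSqIn_eq_sInf_QSet {Ω H : Type*} [MeasureSpace Ω] [NormedAddCommGroup H]
    (X : Ω → H) (N : ℕ) (S : Set H) : quantErrSqIn X N S = sInf (QSet X N S) := rfl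

section aux

variable {Ω : Type*} [MeasureSpace Ω] [IsProbabilityMeasure (volume : Measure Ω)]
  {H : Type*} [NormedAddCommGroup H] [InnerProductSpace ℝ H]

lemma QSet_nonneg (X : Ω → H) (N : ℕ) (S : Set H) :
    ∀ v ∈ QSet X N S, (0 : ℝ) ≤ v := by
  rintro v ⟨Γ, h, -, -, rfl⟩
  refine integral_nonneg fun ω => ?_
  exact Finset.le_inf' h _ fun a _ => sq_nonneg _

lemma QSet_bddBelow (X : Ω → H) (N : ℕ) (S : Set H) : BddBelow (QSet X N S) :=
  ⟨0, fun v hv => QSet_nonneg X N S v hv⟩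

lemma QSet_nonempty (X : Ω → H) {N : ℕ} (hN : 0 < N) {S : Set H} {x : H} (hx : x ∈ S) :
    (QSet X N S).Nonempty := by
  refine ⟨_, {x}, Finset.singleton_nonempty x, ?_, by simpa using Nat.one_le_iff_ne_zero.mpr hN.ne', rfl⟩
  simpa using hx

lemma QSet_mono (X : Ω → H) (N : ℕ) {S T : Set H} (hST : S ⊆ T) :
    QSet X N S ⊆ QSet X N T := by
  rintro v ⟨Γ, h, hΓ, hcard, rfl⟩
  exact ⟨Γ, h, hΓ.trans hST, hcard, rfl⟩

lemma integrable_inf' {Y : Ω → H} (hY : MemLp Y 2 volume) (Γ : Finset H) (h : Γ.Nonempty) :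
    Integrable (fun ω => Γ.inf' h fun a => ‖Y ω - a‖ ^ 2) volume := by
  induction h using Finset.Nonempty.cons_induction with
  | singleton a => exact ((hY.sub (memLp_const a)).norm).integrable_sq
  | cons a s ha hs ih =>
      have heq : (fun ω => (Finset.cons a s ha).inf' (Finset.cons_nonempty ha)
          fun b => ‖Y ω - b‖ ^ 2)
          = fun ω => (‖Y ω - a‖ ^ 2) ⊓ (s.inf' hs fun b => ‖Y ω - b‖ ^ 2) :=
        funext fun ω => Finset.inf'_cons hs _
      rw [heq]
      exact (((hY.sub (memLp_const a)).norm).integrable_sq).inf ih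

lemma memℒp_proj (U : Submodule ℝ H) [CompleteSpace U] {X : Ω → H} (hX : MemLp X 2 volume) :
    MemLp (fun ω => (U.orthogonalProjectionOnto (X ω) : H)) 2 volume := by
  have := (U.subtypeL.comp (U.orthogonalProjectionOnto)).comp_memLp' hX
  exact this

lemma norm_proj_le (U : Submodule ℝ H) [CompleteSpace U] (v : H) :
    ‖(U.orthogonalProjectionOnto v : H)‖ ≤ ‖v‖ := by
  have h1 : ‖U.orthogonalProjectionOnto v‖ ≤ ‖U.orthogonalProjectionOnto‖ * ‖v‖ :=
    (U.orthogonalProjectionOnto).le_opNorm v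
  have h2 : ‖U.orthogonalProjectionOnto‖ ≤ 1 := Submodule.orthogonalProjectionOnto_norm_le U
  calc ‖(U.orthogonalProjectionOnto v : H)‖ = ‖U.orthogonalProjectionOnto v‖ := rfl
    _ ≤ ‖U.orthogonalProjectionOnto‖ * ‖v‖ := h1
    _ ≤ 1 * ‖v‖ := mul_le_mul_of_nonneg_right h2 (norm_nonneg _)
    _ = ‖v‖ := one_mul _

/-- Projecting a codebook onto `U` can only decrease the error for the projected variable. -/
lemma exists_le_proj (U : Submodule ℝ H) [CompleteSpace U] {Z : Ω → H}
    (hZ : MemLp Z 2 volume) (N : ℕ) :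
    ∀ v ∈ QSet Z N Set.univ,
      ∃ w ∈ QSet (fun ω => (U.orthogonalProjectionOnto (Z ω) : H)) N (U : Set H), w ≤ v := by
  classical
  rintro v ⟨Γ, h, -, hcard, rfl⟩
  have h' : (Γ.image (fun a => (U.orthogonalProjectionOnto a : H))).Nonempty := h.image _
  refine ⟨_, ⟨Γ.image (fun a => (U.orthogonalProjectionOnto a : H)), h', ?_, ?_, rfl⟩, ?_⟩
  · intro b hb
    simp only [Finset.coe_image, Set.mem_image, Finset.mem_coe] at hb
    obtain ⟨a, -, rfl⟩ := hb
    exact (U.orthogonalProjectionOnto a).2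
  · exact (Finset.card_image_le).trans hcard
  · refine integral_mono (integrable_inf' (memℒp_proj U hZ) _ h')
      (integrable_inf' hZ Γ h) fun ω => ?_
    rw [Finset.inf'_image]
    refine Finset.le_inf' _ _ fun a ha => ?_
    refine le_trans (Finset.inf'_le _ ha) ?_
    simp only [Function.comp_apply]
    have heq : (U.orthogonalProjectionOnto (Z ω) : H) - (U.orthogonalProjectionOnto a : H)
        = (U.orthogonalProjectionOnto (Z ω - a) : H) := by
      rw [map_sub]; rfl
    rw [heq]
    exact pow_le_pow_left₀ (norm_nonneg _) (norm_proj_le U _) 2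

/-- Pythagoras decomposition of the error for codebooks inside `U`. -/
lemma integral_inf'_eq (U : Submodule ℝ H) [CompleteSpace U] {X : Ω → H}
    (hX : MemLp X 2 volume) {Γ : Finset H} (h : Γ.Nonempty) (hΓ : (Γ : Set H) ⊆ (U : Set H)) :
    (∫ ω, Γ.inf' h fun a => ‖X ω - a‖ ^ 2)
      = (∫ ω, ‖X ω - (U.orthogonalProjectionOnto (X ω) : H)‖ ^ 2)
        + ∫ ω, Γ.inf' h fun a => ‖(U.orthogonalProjectionOnto (X ω) : H) - a‖ ^ 2 := by
  set Y : Ω → H := fun ω => (U.orthogonalProjectionOnto (X ω) : H) with hYdef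
  have hY : MemLp Y 2 volume := memℒp_proj U hX
  have hptwise : ∀ ω, (Γ.inf' h fun a => ‖X ω - a‖ ^ 2)
      = ‖X ω - Y ω‖ ^ 2 + Γ.inf' h fun a => ‖Y ω - a‖ ^ 2 := by
    intro ω
    have hcong : (Γ.inf' h fun a => ‖X ω - a‖ ^ 2)
        = Γ.inf' h fun a => ‖X ω - Y ω‖ ^ 2 + ‖Y ω - a‖ ^ 2 := by
      refine Finset.inf'_congr h rfl fun a ha => ?_
      have haU : a ∈ U := hΓ (Finset.mem_coe.mpr ha)
      have hsplit : X ω - a = (X ω - Y ω) + (Y ω - a) := by abel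
      have horth : (inner ℝ (X ω - Y ω) (Y ω - a) : ℝ) = 0 := by
        have h1 : X ω - Y ω ∈ Uᗮ := Submodule.sub_starProjection_mem_orthogonal (K := U) (X ω)
        have h2 : Y ω - a ∈ U := U.sub_mem (U.orthogonalProjectionOnto (X ω)).2 haU
        exact Submodule.inner_left_of_mem_orthogonal h2 h1
      rw [hsplit, norm_add_sq_real, horth]
      ring
    rw [hcong]
    exact (Finset.apply_inf'_eq_inf'_comp h (f := fun a => ‖Y ω - a‖ ^ 2)
      (fun x => ‖X ω - Y ω‖ ^ 2 + x) (fun x y => (min_add_add_left _ _ _).symm)).symm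
  show (∫ ω, Γ.inf' h fun a => ‖X ω - a‖ ^ 2)
      = (∫ ω, ‖X ω - Y ω‖ ^ 2) + ∫ ω, Γ.inf' h fun a => ‖Y ω - a‖ ^ 2
  calc (∫ ω, Γ.inf' h fun a => ‖X ω - a‖ ^ 2)
      = ∫ ω, (‖X ω - Y ω‖ ^ 2 + Γ.inf' h fun a => ‖Y ω - a‖ ^ 2) :=
        integral_congr_ae (Filter.Eventually.of_forall hptwise)
    _ = (∫ ω, ‖X ω - Y ω‖ ^ 2) + ∫ ω, Γ.inf' h fun a => ‖Y ω - a‖ ^ 2 :=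
        integral_add ((hX.sub hY).norm).integrable_sq (integrable_inf' hY Γ h)

end aux

/-- Reduction of dimension: for a finite dimensional subspace `U` of `H`,
`e_N(Π_U X)² ≤ e_N(X)² ≤ E‖X − Π_U X‖² + e_N(Π_U X)²`, the right-hand side being
exactly the infimum of the quantization error over codebooks contained in `U`. -/
theorem stmt2
    {Ω : Type*} [MeasureSpace Ω] [IsProbabilityMeasure (volume : Measure Ω)]
    {H : Type*} [NormedAddCommGroup H] [InnerProductSpace ℝ H]
    (U : Submodule ℝ H) [FiniteDimensional ℝ U]
    (X : Ω → H) (hX : MemLp X 2 volume)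
    (N : ℕ) (hN : 0 < N) :
    quantErrSq (fun ω => (U.orthogonalProjectionOnto (X ω) : H)) N ≤ quantErrSq X N ∧
    quantErrSq X N ≤
      (∫ ω, ‖X ω - (U.orthogonalProjectionOnto (X ω) : H)‖ ^ 2)
        + quantErrSq (fun ω => (U.orthogonalProjectionOnto (X ω) : H)) N ∧
    quantErrSqIn X N (U : Set H) =
      (∫ ω, ‖X ω - (U.orthogonalProjectionOnto (X ω) : H)‖ ^ 2)
        + quantErrSq (fun ω => (U.orthogonalProjectionOnto (X ω) : H)) N := by
  classical
  set Y : Ω → H := fun ω => (U.orthogonalProjectionOnto (X ω) : H) with hYdef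
  have hY : MemLp Y 2 volume := memℒp_proj U hX
  set c : ℝ := ∫ ω, ‖X ω - (U.orthogonalProjectionOnto (X ω) : H)‖ ^ 2 with hc
  -- the projection of Y is Y itself
  have hprojY : (fun ω => (U.orthogonalProjectionOnto (Y ω) : H)) = Y := by
    funext ω
    simp only [hYdef]
    rw [Submodule.orthogonalProjectionOnto_mem_subspace_eq_self]
  -- nonemptiness of the various sets
  have hne_univX : (QSet X N (Set.univ : Set H)).Nonempty :=
    QSet_nonempty X hN (Set.mem_univ (0 : H))
  have hne_univY : (QSet Y N (Set.univ : Set H)).Nonempty :=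
    QSet_nonempty Y hN (Set.mem_univ (0 : H))
  have hne_UX : (QSet X N (U : Set H)).Nonempty := QSet_nonempty X hN U.zero_mem
  have hne_UY : (QSet Y N (U : Set H)).Nonempty := QSet_nonempty Y hN U.zero_mem
  have hqX : quantErrSq X N = sInf (QSet X N (Set.univ : Set H)) := rfl
  have hqY : quantErrSq Y N = sInf (QSet Y N (Set.univ : Set H)) := rfl
  -- quantErrSqIn Y N U = quantErrSq Y N
  have hYU : sInf (QSet Y N (U : Set H)) = sInf (QSet Y N (Set.univ : Set H)) := by
    refine le_antisymm ?_ ?_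
    · refine le_csInf hne_univY fun v hv => ?_
      obtain ⟨w, hw, hwle⟩ := exists_le_proj U hY N v hv
      rw [hprojY] at hw
      exact (csInf_le (QSet_bddBelow Y N _) hw).trans hwle
    · exact csInf_le_csInf (QSet_bddBelow Y N _) hne_UY
        (QSet_mono Y N (Set.subset_univ _))
  -- Pythagoras: QSet X N U = (c + ·) '' QSet Y N U
  have hsetEq : QSet X N (U : Set H) = (fun w => c + w) '' QSet Y N (U : Set H) := by
    ext v
    constructor
    · rintro ⟨Γ, h, hΓ, hcard, rfl⟩
      exact ⟨_, ⟨Γ, h, hΓ, hcard, rfl⟩, (integral_inf'_eq U hX h hΓ).symm⟩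
    · rintro ⟨w, ⟨Γ, h, hΓ, hcard, rfl⟩, rfl⟩
      exact ⟨Γ, h, hΓ, hcard, (integral_inf'_eq U hX h hΓ).symm⟩
  have hbdd_img : BddBelow ((fun w => c + w) '' QSet Y N (U : Set H)) := by
    refine ⟨c, ?_⟩
    rintro v ⟨w, hw, rfl⟩
    have := QSet_nonneg Y N (U : Set H) w hw
    show c ≤ c + w
    linarith
  have hInfEq : sInf (QSet X N (U : Set H)) = c + sInf (QSet Y N (U : Set H)) := by
    rw [hsetEq]
    refine le_antisymm ?_ ?_
    · have : sInf (QSet Y N (U : Set H))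
          ≥ sInf ((fun w => c + w) '' QSet Y N (U : Set H)) - c := by
        refine le_csInf hne_UY fun w hw => ?_
        have hle : sInf ((fun w => c + w) '' QSet Y N (U : Set H)) ≤ c + w :=
          csInf_le hbdd_img ⟨w, hw, rfl⟩
        linarith
      linarith
    · refine le_csInf (hne_UY.image _) ?_
      rintro v ⟨w, hw, rfl⟩
      exact add_le_add_right (csInf_le (QSet_bddBelow Y N _) hw) c
  have key3 : quantErrSqIn X N (U : Set H) = c + quantErrSq Y N := by
    rw [quantErrSqIn_eq_sInf_QSet, hInfEq, hYU, hqY]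
  refine ⟨?_, ?_, key3⟩
  · -- e_N(Y)² ≤ e_N(X)²
    rw [hqY, hqX, ← hYU]
    refine le_csInf hne_univX fun v hv => ?_
    obtain ⟨w, hw, hwle⟩ := exists_le_proj U hX N v hv
    exact (csInf_le (QSet_bddBelow Y N _) hw).trans hwle
  · -- e_N(X)² ≤ c + e_N(Y)²
    rw [← key3, hqX, quantErrSqIn_eq_sInf_QSet]
    exact csInf_le_csInf (QSet_bddBelow X N _) hne_UX (QSet_mono X N (Set.subset_univ _))
end

section
/- Karhunen–Loève system of the Brownian motion: for the standard Brownian motion (W_t)_{t∈[0,T]} with covariance function Γ(s,t) = min(s,t), the functions e_n(t) = √(2/T) sin(π(n−1/2) t/T), n ≥ 1, form an orthonormal family in L²([0,T]) and are eigenfunctions of the covariance operator (C f)(t) = ∫₀^T min(s,t) f(s) ds with eigenvalues λ_n = (T/(π(n−1/2)))². -/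
open Real intervalIntegral

private lemma hasDerivAt_sin_c (a x : ℝ) :
    HasDerivAt (fun t => Real.sin (a * t)) (a * Real.cos (a * x)) x := by
  simpa [mul_comm, Function.comp_def] using (Real.hasDerivAt_sin (a * x)).comp x ((hasDerivAt_id x).const_mul a)

private lemma hasDerivAt_cos_c (a x : ℝ) :
    HasDerivAt (fun t => Real.cos (a * t)) (-(a * Real.sin (a * x))) x := by
  simpa [mul_comm, Function.comp_def] using (Real.hasDerivAt_cos (a * x)).comp x ((hasDerivAt_id x).const_mul a)

private lemma int_sin_sq (a T : ℝ) (ha : a ≠ 0) :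
    ∫ t in (0:ℝ)..T, Real.sin (a*t) * Real.sin (a*t)
      = T / 2 - Real.sin (2*a*T) / (4*a) := by
  have h : ∀ x ∈ Set.uIcc (0:ℝ) T,
      HasDerivAt (fun t => t/2 - Real.sin (2*a*t)/(4*a))
        (Real.sin (a*x) * Real.sin (a*x)) x := by
    intro x _
    have h1 : HasDerivAt (fun t : ℝ => t/2) (1/2) x := (hasDerivAt_id x).div_const 2
    have h2 := (hasDerivAt_sin_c (2*a) x).div_const (4*a)
    have key : Real.sin (a*x) * Real.sin (a*x) = 1/2 - 2*a*Real.cos (2*a*x)/(4*a) := by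
      rw [show (2:ℝ)*a*x = 2*(a*x) by ring, Real.cos_two_mul']
      field_simp
      linear_combination 4 * Real.sin_sq_add_cos_sq (a*x)
    rw [key]
    exact h1.sub h2
  have hint : IntervalIntegrable (fun x => Real.sin (a*x) * Real.sin (a*x))
      MeasureTheory.volume 0 T := (Continuous.mul (by fun_prop) (by fun_prop)).intervalIntegrable _ _
  rw [intervalIntegral.integral_eq_sub_of_hasDerivAt h hint]
  simp

private lemma int_sin_mul_sin (a b T : ℝ) (hab : a - b ≠ 0) (hab2 : a + b ≠ 0) :
    ∫ t in (0:ℝ)..T, Real.sin (a*t) * Real.sin (b*t)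
      = Real.sin ((a-b)*T) / (2*(a-b)) - Real.sin ((a+b)*T) / (2*(a+b)) := by
  have h : ∀ x ∈ Set.uIcc (0:ℝ) T,
      HasDerivAt (fun t => Real.sin ((a-b)*t)/(2*(a-b)) - Real.sin ((a+b)*t)/(2*(a+b)))
        (Real.sin (a*x) * Real.sin (b*x)) x := by
    intro x _
    have h1 := (hasDerivAt_sin_c (a-b) x).div_const (2*(a-b))
    have h2 := (hasDerivAt_sin_c (a+b) x).div_const (2*(a+b))
    have key : Real.sin (a*x) * Real.sin (b*x)
        = (a-b)*Real.cos ((a-b)*x)/(2*(a-b)) - (a+b)*Real.cos ((a+b)*x)/(2*(a+b)) := by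
      rw [show (a-b)*x = a*x - b*x by ring, show (a+b)*x = a*x + b*x by ring,
        Real.cos_sub, Real.cos_add]
      field_simp
      ring
    rw [key]
    exact h1.sub h2
  have hint : IntervalIntegrable (fun x => Real.sin (a*x) * Real.sin (b*x))
      MeasureTheory.volume 0 T := (Continuous.mul (by fun_prop) (by fun_prop)).intervalIntegrable _ _
  rw [intervalIntegral.integral_eq_sub_of_hasDerivAt h hint]
  simp

/-- Karhunen–Loève system of the Brownian motion: the functions
`e_n(t) = √(2/T) sin(π(n−1/2)t/T)` are orthonormal in `L²([0,T])` and are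
eigenfunctions of the covariance operator `f ↦ ∫₀ᵀ min(s,t) f(s) ds` with
eigenvalues `λ_n = (T/(π(n−1/2)))²`. -/
theorem stmt10 (T : ℝ) (hT : 0 < T) :
    (∀ n m : ℕ, 1 ≤ n → 1 ≤ m →
      (∫ t in (0:ℝ)..T,
          (Real.sqrt (2 / T) * Real.sin (π * ((n : ℝ) - 1 / 2) * t / T)) *
          (Real.sqrt (2 / T) * Real.sin (π * ((m : ℝ) - 1 / 2) * t / T)))
        = if n = m then 1 else 0) ∧
    (∀ n : ℕ, 1 ≤ n → ∀ t ∈ Set.Icc (0 : ℝ) T,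
      (∫ s in (0:ℝ)..T,
          min s t * (Real.sqrt (2 / T) * Real.sin (π * ((n : ℝ) - 1 / 2) * s / T)))
        = (T / (π * ((n : ℝ) - 1 / 2))) ^ 2
            * (Real.sqrt (2 / T) * Real.sin (π * ((n : ℝ) - 1 / 2) * t / T))) := by
  have hTne : T ≠ 0 := ne_of_gt hT
  have hpi := Real.pi_pos
  have hc2 : Real.sqrt (2/T) * Real.sqrt (2/T) = 2/T :=
    Real.mul_self_sqrt (by positivity)
  have hcoef : ∀ n : ℕ, 1 ≤ n → (0:ℝ) < (n:ℝ) - 1/2 := by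
    intro n hn
    have : (1:ℝ) ≤ (n:ℝ) := by exact_mod_cast hn
    linarith
  constructor
  · intro n m hn hm
    set a : ℝ := π * ((n:ℝ) - 1/2) / T with ha
    set b : ℝ := π * ((m:ℝ) - 1/2) / T with hb
    have han : ∀ t : ℝ, π * ((n:ℝ) - 1/2) * t / T = a * t := fun t => by rw [ha]; ring
    have hbm : ∀ t : ℝ, π * ((m:ℝ) - 1/2) * t / T = b * t := fun t => by rw [hb]; ring
    have hrw : ∀ t : ℝ,
        (Real.sqrt (2/T) * Real.sin (π * ((n:ℝ) - 1/2) * t / T)) *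
        (Real.sqrt (2/T) * Real.sin (π * ((m:ℝ) - 1/2) * t / T))
        = (2/T) * (Real.sin (a*t) * Real.sin (b*t)) := by
      intro t
      rw [han, hbm, mul_mul_mul_comm, hc2]
    simp only [hrw, intervalIntegral.integral_const_mul]
    have hna := hcoef n hn
    have hma := hcoef m hm
    have hapos : 0 < a := by rw [ha]; positivity
    have hbpos : 0 < b := by rw [hb]; positivity
    by_cases hnm : n = m
    · subst hnm
      rw [if_pos rfl, int_sin_sq a T (ne_of_gt hapos)]
      have h2aT : 2*a*T = ((2*(n:ℤ)-1 : ℤ) : ℝ) * π := by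
        rw [ha]; push_cast; field_simp
      rw [h2aT, Real.sin_int_mul_pi]
      field_simp
      ring
    · rw [if_neg hnm]
      have habd : a - b = π * ((n:ℝ) - (m:ℝ)) / T := by rw [ha, hb]; ring
      have hnmne : (n:ℝ) - (m:ℝ) ≠ 0 := by
        intro h
        exact hnm (by exact_mod_cast sub_eq_zero.mp h)
      have hab : a - b ≠ 0 := by
        rw [habd]
        exact div_ne_zero (mul_ne_zero (ne_of_gt hpi) hnmne) hTne
      have hab2 : a + b ≠ 0 := ne_of_gt (by positivity)
      rw [int_sin_mul_sin a b T hab hab2]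
      have h1 : (a-b)*T = (((n:ℤ) - (m:ℤ) : ℤ) : ℝ) * π := by
        rw [habd]; push_cast; field_simp
      have h2 : (a+b)*T = (((n:ℤ) + (m:ℤ) - 1 : ℤ) : ℝ) * π := by
        rw [ha, hb]; push_cast; field_simp; ring
      rw [h1, h2, Real.sin_int_mul_pi, Real.sin_int_mul_pi]
      simp
  · intro n hn t ht
    obtain ⟨ht0, htT⟩ := ht
    set a : ℝ := π * ((n:ℝ) - 1/2) / T with ha
    have han : ∀ s : ℝ, π * ((n:ℝ) - 1/2) * s / T = a * s := fun s => by rw [ha]; ring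
    have hna := hcoef n hn
    have hapos : 0 < a := by rw [ha]; positivity
    have hane : a ≠ 0 := ne_of_gt hapos
    simp only [han]
    have hrw : ∀ s : ℝ,
        min s t * (Real.sqrt (2/T) * Real.sin (a*s))
        = Real.sqrt (2/T) * (min s t * Real.sin (a*s)) := fun s => by ring
    simp only [hrw, intervalIntegral.integral_const_mul]
    -- continuity / integrability of the integrand
    have hcont : Continuous (fun s : ℝ => min s t * Real.sin (a*s)) := by fun_prop
    have hi1 : IntervalIntegrable (fun s : ℝ => min s t * Real.sin (a*s))
        MeasureTheory.volume 0 t := hcont.intervalIntegrable _ _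
    have hi2 : IntervalIntegrable (fun s : ℝ => min s t * Real.sin (a*s))
        MeasureTheory.volume t T := hcont.intervalIntegrable _ _
    have hsplit := intervalIntegral.integral_add_adjacent_intervals hi1 hi2
    -- first piece
    have e1 : (∫ s in (0:ℝ)..t, min s t * Real.sin (a*s)) = ∫ s in (0:ℝ)..t, s * Real.sin (a*s) := by
      apply intervalIntegral.integral_congr
      intro s hs
      rw [Set.uIcc_of_le ht0] at hs
      simp [min_eq_left hs.2]
    have v1 : (∫ s in (0:ℝ)..t, s * Real.sin (a*s))
        = Real.sin (a*t)/a^2 - t * Real.cos (a*t)/a := by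
      have h : ∀ x ∈ Set.uIcc (0:ℝ) t,
          HasDerivAt (fun s => Real.sin (a*s)/a^2 - s * Real.cos (a*s)/a)
            (x * Real.sin (a*x)) x := by
        intro x _
        have h1 := (hasDerivAt_sin_c a x).div_const (a^2)
        have h2 := ((hasDerivAt_id x).mul (hasDerivAt_cos_c a x)).div_const a
        have key : x * Real.sin (a*x)
            = a * Real.cos (a*x)/a^2 - (1 * Real.cos (a*x) + x * -(a * Real.sin (a*x)))/a := by
          field_simp
          ring
        rw [key]
        exact h1.sub h2
      have hint : IntervalIntegrable (fun x : ℝ => x * Real.sin (a*x))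
          MeasureTheory.volume 0 t := (by fun_prop : Continuous _).intervalIntegrable _ _
      rw [intervalIntegral.integral_eq_sub_of_hasDerivAt h hint]
      simp
    -- second piece
    have e2 : (∫ s in t..T, min s t * Real.sin (a*s)) = t * ∫ s in t..T, Real.sin (a*s) := by
      rw [← intervalIntegral.integral_const_mul]
      apply intervalIntegral.integral_congr
      intro s hs
      rw [Set.uIcc_of_le htT] at hs
      simp [min_eq_right hs.1]
    have v2 : (∫ s in t..T, Real.sin (a*s)) = (Real.cos (a*t) - Real.cos (a*T))/a := by
      have h : ∀ x ∈ Set.uIcc t T,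
          HasDerivAt (fun s => -(Real.cos (a*s)/a)) (Real.sin (a*x)) x := by
        intro x _
        have h1 := ((hasDerivAt_cos_c a x).div_const a).neg
        have key : Real.sin (a*x) = -(-(a * Real.sin (a*x))/a) := by field_simp
        rw [key]
        exact h1
      have hint : IntervalIntegrable (fun x : ℝ => Real.sin (a*x))
          MeasureTheory.volume t T := (by fun_prop : Continuous _).intervalIntegrable _ _
      rw [intervalIntegral.integral_eq_sub_of_hasDerivAt h hint]
      ring
    have hcT : Real.cos (a*T) = 0 := by
      rw [show a*T = (n:ℝ)*π - π/2 by rw [ha]; field_simp, Real.cos_sub]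
      simp [Real.sin_nat_mul_pi]
    have hJ : (∫ s in (0:ℝ)..T, min s t * Real.sin (a*s)) = Real.sin (a*t)/a^2 := by
      rw [← hsplit, e1, v1, e2, v2, hcT]
      field_simp
      ring
    have h1a : T / (π * ((n:ℝ) - 1/2)) = 1/a := by rw [ha, one_div_div]
    rw [hJ, h1a]
    clear_value a
    ring
end

section
/- ODE characterization of the OU covariance operator: let T^{OU} f(t) = ∫₀^t (σ²/(2θ)) e^{θ(s−t)} f(s) ds + ∫_t^T (σ²/(2θ)) e^{θ(t−s)} f(s) ds + ∫₀^T (σ_0² − σ²/(2θ)) e^{−θ(s+t)} f(s) ds. If f ∈ C([0,T]) and g = T^{OU} f, then g ∈ C²([0,T]), g'' − θ² g = −σ² f on [0,T], and the boundary conditions σ_0² g'(0) = (σ² − θσ_0²) g(0) and g'(T) = −θ g(T) hold. Conversely, if g ∈ C²([0,T]) and f = (θ²g − g'')/σ² satisfies these boundary conditions, then g = T^{OU} f. -/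
open Real intervalIntegral Set

open MeasureTheory in

lemma expDeriv (a t : ℝ) : HasDerivAt (fun x : ℝ => Real.exp (a * x)) (a * Real.exp (a * t)) t := by
  have := (Real.hasDerivAt_exp (a * t)).comp t ((hasDerivAt_id t).const_mul a)
  simpa [mul_comm, Function.comp_def] using this

lemma ftc2_aux {T a b : ℝ} (ha : a ∈ Icc (0:ℝ) T) (hb : b ∈ Icc (0:ℝ) T) (hab : a ≤ b)
    {P p : ℝ → ℝ} (hP : ∀ s ∈ Icc (0:ℝ) T, HasDerivWithinAt P (p s) (Icc (0:ℝ) T) s)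
    (hp : ContinuousOn p (Icc (0:ℝ) T)) : ∫ s in a..b, p s = P b - P a := by
  have hsub : Icc a b ⊆ Icc (0:ℝ) T := Icc_subset_Icc ha.1 hb.2
  apply integral_eq_sub_of_hasDeriv_right_of_le hab
  · intro x hx
    exact ((hP x (hsub hx)).differentiableWithinAt.continuousWithinAt).mono hsub
  · intro x hx
    have hx' : x ∈ Icc (0:ℝ) T := hsub (Ioo_subset_Icc_self hx)
    have : HasDerivAt P (p x) x := by
      apply (hP x hx').hasDerivAt
      exact Icc_mem_nhds (lt_of_le_of_lt ha.1 hx.1) (lt_of_lt_of_le hx.2 hb.2)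
    exact this.hasDerivWithinAt
  · apply ContinuousOn.intervalIntegrable
    rw [uIcc_of_le hab]
    exact hp.mono hsub



/-- ODE characterization of the Ornstein–Uhlenbeck covariance operator `T^{OU}`:
if `f` is continuous on `[0,T]` and `g = T^{OU} f`, then
`g'' − θ²g = −σ²f` on `[0,T]` with boundary conditions
`σ₀² g'(0) = (σ² − θσ₀²) g(0)` and `g'(T) = −θ g(T)`; conversely any `C²`
function `g` satisfying these boundary conditions equals `T^{OU} f` for
`f = (θ²g − g'')/σ²`. -/
theorem stmt15 (θ σ σ0sq T : ℝ) (hθ : 0 < θ) (hσ : 0 < σ) (hσ0 : 0 ≤ σ0sq)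
    (hT : 0 < T)
    (TOU : (ℝ → ℝ) → ℝ → ℝ)
    (hTOU : ∀ f t, TOU f t
      = (∫ s in (0:ℝ)..t, σ ^ 2 / (2 * θ) * Real.exp (θ * (s - t)) * f s)
        + (∫ s in t..T, σ ^ 2 / (2 * θ) * Real.exp (θ * (t - s)) * f s)
        + ∫ s in (0:ℝ)..T, (σ0sq - σ ^ 2 / (2 * θ)) * Real.exp (-θ * (s + t)) * f s) :
    (∀ f : ℝ → ℝ, ContinuousOn f (Icc 0 T) →
      ∀ g : ℝ → ℝ, (∀ t ∈ Icc 0 T, g t = TOU f t) →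
        (∀ t ∈ Icc 0 T,
          derivWithin (derivWithin g (Icc 0 T)) (Icc 0 T) t - θ ^ 2 * g t
            = -(σ ^ 2) * f t) ∧
        σ0sq * derivWithin g (Icc 0 T) 0 = (σ ^ 2 - θ * σ0sq) * g 0 ∧
        derivWithin g (Icc 0 T) T = -θ * g T) ∧
    (∀ g : ℝ → ℝ, ContDiffOn ℝ 2 g (Icc 0 T) →
      σ0sq * derivWithin g (Icc 0 T) 0 = (σ ^ 2 - θ * σ0sq) * g 0 →
      derivWithin g (Icc 0 T) T = -θ * g T →
      ∀ t ∈ Icc 0 T,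
        g t = TOU (fun s =>
          (θ ^ 2 * g s - derivWithin (derivWithin g (Icc 0 T)) (Icc 0 T) s) / σ ^ 2) t) := by
  have hUD : UniqueDiffOn ℝ (Icc (0:ℝ) T) := uniqueDiffOn_Icc hT
  constructor
  · obtain ⟨c, hc2⟩ : ∃ c : ℝ, σ ^ 2 = 2 * θ * c := ⟨σ ^ 2 / (2 * θ), by field_simp⟩
    have hcrw : σ ^ 2 / (2 * θ) = c := by rw [hc2]; field_simp
    set d : ℝ := σ0sq - c with hd
    have hTOU' : ∀ f t, TOU f t
        = (∫ s in (0:ℝ)..t, c * Real.exp (θ * (s - t)) * f s)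
          + (∫ s in t..T, c * Real.exp (θ * (t - s)) * f s)
          + ∫ s in (0:ℝ)..T, d * Real.exp (-θ * (s + t)) * f s := by
      intro f t; rw [hTOU, hcrw, hd]
    clear hTOU hcrw
    intro f hf g hg
    set F : ℝ → ℝ := fun x => f (projIcc (0:ℝ) T hT.le x) with hFdef
    have hFc : Continuous F := hf.comp_continuous
      (continuous_subtype_val.comp continuous_projIcc) (fun x => (projIcc (0:ℝ) T hT.le x).2)
    have hFeq : ∀ x ∈ Icc (0:ℝ) T, F x = f x := by
      intro x hx
      simp [hFdef, projIcc_of_mem hT.le hx]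
    have hcont1 : Continuous (fun s => Real.exp (θ * s) * F s) :=
      (Real.continuous_exp.comp (continuous_const.mul continuous_id)).mul hFc
    have hcont2 : Continuous (fun s => Real.exp (-θ * s) * F s) :=
      (Real.continuous_exp.comp (continuous_const.mul continuous_id)).mul hFc
    set u : ℝ → ℝ := fun t => ∫ s in (0:ℝ)..t, Real.exp (θ * s) * F s with hu_def
    set w : ℝ → ℝ := fun t => ∫ s in (0:ℝ)..t, Real.exp (-θ * s) * F s with hw_def
    set K : ℝ := w T with hK
    set G : ℝ → ℝ := fun t => c * Real.exp (-θ * t) * u t + c * Real.exp (θ * t) * (K - w t)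
        + d * Real.exp (-θ * t) * K with hGdef
    have hu : ∀ t, HasDerivAt u (Real.exp (θ * t) * F t) t := fun t =>
      integral_hasDerivAt_right (hcont1.intervalIntegrable _ _)
        (hcont1.stronglyMeasurableAtFilter _ _) hcont1.continuousAt
    have hw : ∀ t, HasDerivAt w (Real.exp (-θ * t) * F t) t := fun t =>
      integral_hasDerivAt_right (hcont2.intervalIntegrable _ _)
        (hcont2.stronglyMeasurableAtFilter _ _) hcont2.continuousAt
    have hgG : ∀ x ∈ Icc (0:ℝ) T, g x = G x := by
      intro x hx
      have e1 : (∫ s in (0:ℝ)..x, c * Real.exp (θ * (s - x)) * f s)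
          = c * Real.exp (-θ * x) * u x := by
        rw [hu_def, ← intervalIntegral.integral_const_mul]
        apply intervalIntegral.integral_congr
        intro s hs
        rw [uIcc_of_le hx.1] at hs
        show c * Real.exp (θ * (s - x)) * f s
          = c * Real.exp (-θ * x) * (Real.exp (θ * s) * F s)
        rw [hFeq s ⟨hs.1, hs.2.trans hx.2⟩, show Real.exp (θ * (s - x))
          = Real.exp (-θ * x) * Real.exp (θ * s) by rw [← Real.exp_add]; congr 1; ring]
        ring
      have e2 : (∫ s in x..T, c * Real.exp (θ * (x - s)) * f s)
          = c * Real.exp (θ * x) * (K - w x) := by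
        have hadj : w x + (∫ s in x..T, Real.exp (-θ * s) * F s) = K :=
          integral_add_adjacent_intervals (hcont2.intervalIntegrable _ _)
            (hcont2.intervalIntegrable _ _)
        have hxT : (∫ s in x..T, Real.exp (-θ * s) * F s) = K - w x := by linarith
        rw [← hxT, ← intervalIntegral.integral_const_mul]
        apply intervalIntegral.integral_congr
        intro s hs
        rw [uIcc_of_le hx.2] at hs
        show c * Real.exp (θ * (x - s)) * f s
          = c * Real.exp (θ * x) * (Real.exp (-θ * s) * F s)
        rw [hFeq s ⟨hx.1.trans hs.1, hs.2⟩, show Real.exp (θ * (x - s))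
          = Real.exp (θ * x) * Real.exp (-θ * s) by rw [← Real.exp_add]; congr 1; ring]
        ring
      have e3 : (∫ s in (0:ℝ)..T, d * Real.exp (-θ * (s + x)) * f s)
          = d * Real.exp (-θ * x) * K := by
        rw [hK, hw_def, ← intervalIntegral.integral_const_mul]
        apply intervalIntegral.integral_congr
        intro s hs
        rw [uIcc_of_le hT.le] at hs
        show d * Real.exp (-θ * (s + x)) * f s
          = d * Real.exp (-θ * x) * (Real.exp (-θ * s) * F s)
        rw [hFeq s hs, show Real.exp (-θ * (s + x))
          = Real.exp (-θ * x) * Real.exp (-θ * s) by rw [← Real.exp_add]; congr 1; ring]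
        ring
      rw [hg x hx, hTOU', e1, e2, e3, hGdef]
    set G1 : ℝ → ℝ := fun x => θ * c * Real.exp (θ * x) * (K - w x)
        - θ * c * Real.exp (-θ * x) * u x - θ * d * Real.exp (-θ * x) * K with hG1def
    have hG : ∀ x, HasDerivAt G (G1 x) x := by
      intro x
      have h1 := ((expDeriv (-θ) x).const_mul c).mul (hu x)
      have h2 := ((expDeriv θ x).const_mul c).mul ((hasDerivAt_const x K).sub (hw x))
      have h3 := (((expDeriv (-θ) x).const_mul d).mul_const K)
      refine ((h1.add h2).add h3).congr_deriv (Eq.symm ?_)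
      simp only [hG1def, Pi.sub_apply]
      ring
    have hG1 : ∀ x, HasDerivAt G1 (θ ^ 2 * G x - σ ^ 2 * F x) x := by
      intro x
      have h1 := ((expDeriv θ x).const_mul (θ * c)).mul ((hasDerivAt_const x K).sub (hw x))
      have h2 := ((expDeriv (-θ) x).const_mul (θ * c)).mul (hu x)
      have h3 := (((expDeriv (-θ) x).const_mul (θ * d)).mul_const K)
      have hE : Real.exp (θ * x) * Real.exp (-θ * x) = 1 := by
        rw [← Real.exp_add, show θ * x + -θ * x = 0 by ring, Real.exp_zero]
      refine ((h1.sub h2).sub h3).congr_deriv (Eq.symm ?_)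
      simp only [hGdef, Pi.sub_apply]
      linear_combination ((2 : ℝ) * θ * c * F x) * hE + (-F x) * hc2
    have dgW : ∀ x ∈ Icc (0:ℝ) T, derivWithin g (Icc 0 T) x = G1 x := by
      intro x hx
      rw [derivWithin_congr hgG (hgG x hx)]
      exact ((hG x).hasDerivWithinAt).derivWithin (hUD x hx)
    have dg2W : ∀ x ∈ Icc (0:ℝ) T, derivWithin (derivWithin g (Icc 0 T)) (Icc 0 T) x
        = θ ^ 2 * G x - σ ^ 2 * F x := by
      intro x hx
      rw [derivWithin_congr dgW (dgW x hx)]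
      exact ((hG1 x).hasDerivWithinAt).derivWithin (hUD x hx)
    have h0T : (0:ℝ) ∈ Icc (0:ℝ) T := ⟨le_rfl, hT.le⟩
    have hTT : T ∈ Icc (0:ℝ) T := ⟨hT.le, le_rfl⟩
    have hu0 : u 0 = 0 := intervalIntegral.integral_same
    have hw0 : w 0 = 0 := intervalIntegral.integral_same
    refine ⟨fun x hx => ?_, ?_, ?_⟩
    · rw [dg2W x hx, hgG x hx, hFeq x hx]; ring
    · rw [dgW 0 h0T, hgG 0 h0T]
      simp only [hG1def, hGdef, mul_zero, neg_mul, neg_zero, Real.exp_zero, hu0, hw0]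
      linear_combination (-σ0sq * K) * hc2
    · rw [dgW T hTT, hgG T hTT]
      simp only [hG1def, hGdef, hK, sub_self]
      ring
  · intro g hgC hb0 hbT t ht
    set g1 : ℝ → ℝ := derivWithin g (Icc 0 T) with hg1
    set g2 : ℝ → ℝ := derivWithin g1 (Icc 0 T) with hg2
    have hgd : ∀ s ∈ Icc (0:ℝ) T, HasDerivWithinAt g (g1 s) (Icc 0 T) s := fun s hs =>
      ((hgC.differentiableOn (by norm_num)) s hs).hasDerivWithinAt
    have hg1C : ContDiffOn ℝ 1 g1 (Icc 0 T) := hgC.derivWithin hUD (by norm_num)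
    have hg1d : ∀ s ∈ Icc (0:ℝ) T, HasDerivWithinAt g1 (g2 s) (Icc 0 T) s := fun s hs =>
      ((hg1C.differentiableOn (by norm_num)) s hs).hasDerivWithinAt
    have hg2C : ContDiffOn ℝ 0 g2 (Icc 0 T) := hg1C.derivWithin hUD (by norm_num)
    have hg2c : ContinuousOn g2 (Icc 0 T) := hg2C.continuousOn
    have hgc : ContinuousOn g (Icc 0 T) := hgC.continuousOn
    have hg1c : ContinuousOn g1 (Icc 0 T) := hg1C.continuousOn
    set P : ℝ → ℝ := fun s => θ * Real.exp (θ * s) * g s - Real.exp (θ * s) * g1 s with hP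
    set Q : ℝ → ℝ := fun s => -(θ * Real.exp (-θ * s) * g s) - Real.exp (-θ * s) * g1 s with hQ
    have hPd : ∀ s ∈ Icc (0:ℝ) T,
        HasDerivWithinAt P (Real.exp (θ * s) * (θ ^ 2 * g s - g2 s)) (Icc 0 T) s := by
      intro s hs
      have h1 := (((expDeriv θ s).hasDerivWithinAt.const_mul θ).mul (hgd s hs))
      have h2 := ((expDeriv θ s).hasDerivWithinAt.mul (hg1d s hs))
      refine (h1.sub h2).congr_deriv (Eq.symm ?_)
      ring
    have hQd : ∀ s ∈ Icc (0:ℝ) T,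
        HasDerivWithinAt Q (Real.exp (-θ * s) * (θ ^ 2 * g s - g2 s)) (Icc 0 T) s := by
      intro s hs
      have h1 := ((((expDeriv (-θ) s).hasDerivWithinAt.const_mul θ).mul (hgd s hs)).neg)
      have h2 := ((expDeriv (-θ) s).hasDerivWithinAt.mul (hg1d s hs))
      refine (h1.sub h2).congr_deriv (Eq.symm ?_)
      ring
    have hexpc : ∀ a : ℝ, Continuous (fun s : ℝ => Real.exp (a * s)) := fun a =>
      Real.continuous_exp.comp (continuous_const.mul continuous_id)
    have hpc : ContinuousOn (fun s => Real.exp (θ * s) * (θ ^ 2 * g s - g2 s)) (Icc (0:ℝ) T) :=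
      ((hexpc θ).continuousOn).mul ((continuousOn_const.mul hgc).sub hg2c)
    have hqc : ContinuousOn (fun s => Real.exp (-θ * s) * (θ ^ 2 * g s - g2 s)) (Icc (0:ℝ) T) :=
      ((hexpc (-θ)).continuousOn).mul ((continuousOn_const.mul hgc).sub hg2c)
    have h0T : (0:ℝ) ∈ Icc (0:ℝ) T := ⟨le_rfl, hT.le⟩
    have hTT : T ∈ Icc (0:ℝ) T := ⟨hT.le, le_rfl⟩
    have I1 := ftc2_aux h0T ht ht.1 hPd hpc
    have I2 := ftc2_aux ht hTT ht.2 hQd hqc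
    have hQT : Q T = 0 := by
      simp only [hQ]
      rw [hbT]
      ring
    have hσ2 : (σ:ℝ) ^ 2 ≠ 0 := pow_ne_zero 2 hσ.ne'
    rw [hTOU]
    have e1 : (∫ s in (0:ℝ)..t, σ ^ 2 / (2 * θ) * Real.exp (θ * (s - t))
          * ((θ ^ 2 * g s - g2 s) / σ ^ 2))
        = (σ ^ 2 / (2 * θ) * Real.exp (-θ * t) / σ ^ 2) * (P t - P 0) := by
      rw [← I1, ← intervalIntegral.integral_const_mul]
      apply intervalIntegral.integral_congr
      intro s hs
      show σ ^ 2 / (2 * θ) * Real.exp (θ * (s - t)) * ((θ ^ 2 * g s - g2 s) / σ ^ 2)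
        = (σ ^ 2 / (2 * θ) * Real.exp (-θ * t) / σ ^ 2) * (Real.exp (θ * s) * (θ ^ 2 * g s - g2 s))
      rw [show Real.exp (θ * (s - t)) = Real.exp (-θ * t) * Real.exp (θ * s) by
        rw [← Real.exp_add]; congr 1; ring]
      ring
    have e2 : (∫ s in t..T, σ ^ 2 / (2 * θ) * Real.exp (θ * (t - s))
          * ((θ ^ 2 * g s - g2 s) / σ ^ 2))
        = (σ ^ 2 / (2 * θ) * Real.exp (θ * t) / σ ^ 2) * (Q T - Q t) := by
      rw [← I2, ← intervalIntegral.integral_const_mul]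
      apply intervalIntegral.integral_congr
      intro s hs
      show σ ^ 2 / (2 * θ) * Real.exp (θ * (t - s)) * ((θ ^ 2 * g s - g2 s) / σ ^ 2)
        = (σ ^ 2 / (2 * θ) * Real.exp (θ * t) / σ ^ 2) * (Real.exp (-θ * s) * (θ ^ 2 * g s - g2 s))
      rw [show Real.exp (θ * (t - s)) = Real.exp (θ * t) * Real.exp (-θ * s) by
        rw [← Real.exp_add]; congr 1; ring]
      ring
    have I3 := ftc2_aux h0T hTT hT.le hQd hqc
    have e3 : (∫ s in (0:ℝ)..T, (σ0sq - σ ^ 2 / (2 * θ)) * Real.exp (-θ * (s + t))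
          * ((θ ^ 2 * g s - g2 s) / σ ^ 2))
        = ((σ0sq - σ ^ 2 / (2 * θ)) * Real.exp (-θ * t) / σ ^ 2) * (Q T - Q 0) := by
      rw [← I3, ← intervalIntegral.integral_const_mul]
      apply intervalIntegral.integral_congr
      intro s hs
      show (σ0sq - σ ^ 2 / (2 * θ)) * Real.exp (-θ * (s + t)) * ((θ ^ 2 * g s - g2 s) / σ ^ 2)
        = ((σ0sq - σ ^ 2 / (2 * θ)) * Real.exp (-θ * t) / σ ^ 2)
          * (Real.exp (-θ * s) * (θ ^ 2 * g s - g2 s))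
      rw [show Real.exp (-θ * (s + t)) = Real.exp (-θ * t) * Real.exp (-θ * s) by
        rw [← Real.exp_add]; congr 1; ring]
      ring
    rw [e1, e2, e3, hQT]
    simp only [hP, hQ, mul_zero, neg_mul, neg_zero, Real.exp_zero, zero_sub]
    have hE : Real.exp (θ * t) * Real.exp (-θ * t) = 1 := by
      rw [← Real.exp_add, show θ * t + -θ * t = 0 by ring, Real.exp_zero]
    have hE' : Real.exp (-θ * t) = (Real.exp (θ * t))⁻¹ := by
      rw [show -θ * t = -(θ * t) by ring, Real.exp_neg]
    have hE2 : Real.exp (θ * t) * Real.exp (-(θ * t)) = 1 := by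
      rw [← Real.exp_add, show θ * t + -(θ * t) = 0 by ring, Real.exp_zero]
    field_simp
    linear_combination (-(2:ℝ) * θ * σ ^ 2 * g t) * hE2
      + (-(2:ℝ) * θ * Real.exp (-(θ * t))) * hb0
end

section
/- Closed form for the regression coefficients with uniform time steps: in the setting of the previous statement with t_j = jT/n = jh, the coefficient of W_{t_j} in E[∫₀^T W_s e_i^W(s) ds | W_{t_0}, …, W_{t_n}] equals λ_i^W (2 e_i^W(t_j) − e_i^W(t_{j−1}) − e_i^W(t_{j+1}))/h for 0 < j < n, equals λ_i^W ((e_i^W)'(t_0) − (e_i^W(t_1) − e_i^W(t_0))/h) for j = 0, and equals λ_i^W ((e_i^W(t_n) − e_i^W(t_{n−1}))/h − (e_i^W)'(t_n)) for j = n, where λ_i^W = (T/(π(i−1/2)))². -/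
open Real intervalIntegral

lemma int_left (ω u v : ℝ) (hω : ω ≠ 0) :
    ∫ s in u..v, (v - s) * Real.sin (ω * s)
      = (v - u) * Real.cos (ω * u) / ω + (Real.sin (ω * u) - Real.sin (ω * v)) / ω ^ 2 := by
  have key : ∀ s : ℝ, HasDerivAt
      (fun s => -(v - s) * Real.cos (ω * s) / ω - Real.sin (ω * s) / ω ^ 2)
      ((v - s) * Real.sin (ω * s)) s := by
    intro s
    have hs : HasDerivAt (fun s : ℝ => ω * s) ω s := by
      simpa using (hasDerivAt_id s).const_mul ω
    have hcos : HasDerivAt (fun s => Real.cos (ω * s)) (-Real.sin (ω * s) * ω) s :=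
      (Real.hasDerivAt_cos (ω * s)).comp s hs
    have hsin : HasDerivAt (fun s => Real.sin (ω * s)) (Real.cos (ω * s) * ω) s :=
      (Real.hasDerivAt_sin (ω * s)).comp s hs
    have h1 : HasDerivAt (fun s : ℝ => -(v - s)) 1 s := by
      exact (((hasDerivAt_id s).const_sub v).neg).congr_deriv (neg_neg 1)
    have := ((h1.mul hcos).div_const ω).sub (hsin.div_const (ω ^ 2))
    refine this.congr_deriv ?_
    field_simp
    ring
  rw [intervalIntegral.integral_eq_sub_of_hasDerivAt (fun s _ => key s)
    (by apply Continuous.intervalIntegrable; fun_prop)]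
  field_simp
  ring

lemma int_right (ω u v : ℝ) (hω : ω ≠ 0) :
    ∫ s in u..v, (s - u) * Real.sin (ω * s)
      = -(v - u) * Real.cos (ω * v) / ω + (Real.sin (ω * v) - Real.sin (ω * u)) / ω ^ 2 := by
  have key : ∀ s : ℝ, HasDerivAt
      (fun s => -(s - u) * Real.cos (ω * s) / ω + Real.sin (ω * s) / ω ^ 2)
      ((s - u) * Real.sin (ω * s)) s := by
    intro s
    have hs : HasDerivAt (fun s : ℝ => ω * s) ω s := by
      simpa using (hasDerivAt_id s).const_mul ω
    have hcos : HasDerivAt (fun s => Real.cos (ω * s)) (-Real.sin (ω * s) * ω) s :=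
      (Real.hasDerivAt_cos (ω * s)).comp s hs
    have hsin : HasDerivAt (fun s => Real.sin (ω * s)) (Real.cos (ω * s) * ω) s :=
      (Real.hasDerivAt_sin (ω * s)).comp s hs
    have h1 : HasDerivAt (fun s : ℝ => -(s - u)) (-1) s := by
      exact ((hasDerivAt_id s).sub_const u).neg
    have := ((h1.mul hcos).div_const ω).add (hsin.div_const (ω ^ 2))
    refine this.congr_deriv ?_
    field_simp
    ring
  rw [intervalIntegral.integral_eq_sub_of_hasDerivAt (fun s _ => key s)
    (by apply Continuous.intervalIntegrable; fun_prop)]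
  field_simp
  ring

/-- Closed form of the Brownian-motion regression coefficients for uniform time
steps `t_j = jT/n = jh`: the coefficient of `W_{t_j}`, namely `A_j + B_{j−1}`
(resp. `A_0`, resp. `B_{n−1}` at the endpoints), equals
`λ_i (2e_i(t_j) − e_i(t_{j−1}) − e_i(t_{j+1}))/h` for `0 < j < n`,
`λ_i (e_i'(t_0) − (e_i(t_1) − e_i(t_0))/h)` for `j = 0`, and
`λ_i ((e_i(t_n) − e_i(t_{n−1}))/h − e_i'(t_n))` for `j = n`. -/
theorem stmt19 (T : ℝ) (hT : 0 < T) (n : ℕ) (hn : 0 < n)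
    (h : ℝ) (hh : h = T / n)
    (t : ℕ → ℝ) (ht : ∀ j, t j = (j : ℝ) * h)
    (i : ℕ) (hi : 1 ≤ i)
    (e : ℝ → ℝ)
    (he : ∀ s, e s = Real.sqrt (2 / T) * Real.sin (π * ((i : ℝ) - 1 / 2) * s / T))
    (lam : ℝ) (hlam : lam = (T / (π * ((i : ℝ) - 1 / 2))) ^ 2)
    (A B : ℕ → ℝ)
    (hA : ∀ j, j < n → A j = ∫ s in (t j)..(t (j + 1)),
        ((t (j + 1) - s) / h) * e s)
    (hB : ∀ j, j < n → B j = ∫ s in (t j)..(t (j + 1)),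
        ((s - t j) / h) * e s) :
    (∀ j, 0 < j → j < n →
      A j + B (j - 1) = lam * (2 * e (t j) - e (t (j - 1)) - e (t (j + 1))) / h) ∧
    A 0 = lam * (deriv e (t 0) - (e (t 1) - e (t 0)) / h) ∧
    B (n - 1) = lam * ((e (t n) - e (t (n - 1))) / h - deriv e (t n)) := by
  have hT' : T ≠ 0 := ne_of_gt hT
  have hn' : (0 : ℝ) < n := by exact_mod_cast hn
  have hhpos : 0 < h := by rw [hh]; positivity
  have hh' : h ≠ 0 := ne_of_gt hhpos
  have hk : (0 : ℝ) < (i : ℝ) - 1 / 2 := by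
    have : (1 : ℝ) ≤ i := by exact_mod_cast hi
    linarith
  set c : ℝ := Real.sqrt (2 / T) with hc
  set ω : ℝ := π * ((i : ℝ) - 1 / 2) / T with hω
  have hωpos : 0 < ω := by
    have := Real.pi_pos
    rw [hω]; positivity
  have hω' : ω ≠ 0 := ne_of_gt hωpos
  have he' : ∀ s, e s = c * Real.sin (ω * s) := by
    intro s
    rw [he s, hc, hω]
    ring_nf
  have hlam' : lam = 1 / ω ^ 2 := by
    rw [hlam, hω]
    have hπ : π ≠ 0 := ne_of_gt Real.pi_pos
    field_simp
  have hderiv : ∀ s, deriv e s = c * (Real.cos (ω * s) * ω) := by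
    have hefun : e = fun s => c * Real.sin (ω * s) := funext he'
    intro s
    rw [hefun]
    have hs : HasDerivAt (fun s : ℝ => ω * s) ω s := by
      simpa using (hasDerivAt_id s).const_mul ω
    have hsin : HasDerivAt (fun s => Real.sin (ω * s)) (Real.cos (ω * s) * ω) s :=
      (Real.hasDerivAt_sin (ω * s)).comp s hs
    exact (hsin.const_mul c).deriv
  have hdiff : ∀ j : ℕ, t (j + 1) - t j = h := by
    intro j
    rw [ht, ht]
    push_cast
    ring
  have hintA : ∀ u v : ℝ, (∫ s in u..v, ((v - s) / h) * e s)
      = c / h * ((v - u) * Real.cos (ω * u) / ω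
        + (Real.sin (ω * u) - Real.sin (ω * v)) / ω ^ 2) := by
    intro u v
    have : (∫ s in u..v, ((v - s) / h) * e s)
        = ∫ s in u..v, (c / h) * ((v - s) * Real.sin (ω * s)) := by
      apply intervalIntegral.integral_congr
      intro s _
      dsimp only
      rw [he' s]; ring
    rw [this, intervalIntegral.integral_const_mul, int_left ω u v hω']
  have hintB : ∀ u v : ℝ, (∫ s in u..v, ((s - u) / h) * e s)
      = c / h * (-(v - u) * Real.cos (ω * v) / ω
        + (Real.sin (ω * v) - Real.sin (ω * u)) / ω ^ 2) := by
    intro u v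
    have : (∫ s in u..v, ((s - u) / h) * e s)
        = ∫ s in u..v, (c / h) * ((s - u) * Real.sin (ω * s)) := by
      apply intervalIntegral.integral_congr
      intro s _
      dsimp only
      rw [he' s]; ring
    rw [this, intervalIntegral.integral_const_mul, int_right ω u v hω']
  refine ⟨?_, ?_, ?_⟩
  · intro j hj0 hjn
    have hj1 : j - 1 + 1 = j := Nat.succ_pred_eq_of_pos hj0
    have hjn' : j - 1 < n := lt_of_le_of_lt (Nat.pred_le j) hjn
    rw [hA j hjn, hB (j - 1) hjn', hj1, hintA, hintB, hdiff j]
    have h2 : t j - t (j - 1) = h := by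
      conv_lhs => rw [← hj1]
      exact hdiff (j - 1)
    rw [h2, he' (t j), he' (t (j - 1)), he' (t (j + 1)), hlam']
    field_simp
    ring
  · have h0 : t 0 = 0 := by rw [ht]; simp
    rw [hA 0 hn, hintA, hdiff 0, h0, hderiv 0, he' (t 1), he' 0, hlam']
    simp only [mul_zero, Real.sin_zero, Real.cos_zero]
    field_simp
    ring
  · have hn1 : n - 1 + 1 = n := Nat.succ_pred_eq_of_pos hn
    have hnn : n - 1 < n := Nat.pred_lt (Nat.pos_iff_ne_zero.mp hn)
    rw [hB (n - 1) hnn, hn1, hintB]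
    have h2 : t n - t (n - 1) = h := by
      conv_lhs => rw [← hn1]
      exact hdiff (n - 1)
    rw [h2, hderiv (t n), he' (t n), he' (t (n - 1)), hlam']
    field_simp
    ring
end
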